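/- Let B be a complete graph on n vertices and let u, w be two distinct vertices of B. Let 𝒳_B be a multiset of pairs of distinct vertices of B, and let a be the number of occurrences in 𝒳_B of the pair {u,w}, b the number of occurrences of pairs {u,x} with x ∉ {u,w}, and c the number of occurrences of pairs {w,x} with x ∉ {u,w}. If n ≤ max{a+b, a+c}, then (B, 𝒳_B, |𝒳_B|) is a No-instance of EDP, i.e., there is no family of |𝒳_B| pairwise edge-disjoint paths connecting the terminal pairs of 𝒳_B. -/

import Mathlib

open SimpleGraph Finset

/-- A family of walks in `G` connecting the terminal pairs `X`. -/
abbrev WalkFamily {V : Type*} (G : SimpleGraph V) {ι : Type*} (X : ι → V × V) :=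
  ∀ i : ι, G.Walk (X i).1 (X i).2

/-- The walks in the family are pairwise edge-disjoint. -/
def PairwiseEdgeDisjoint {V : Type*} (G : SimpleGraph V) {ι : Type*} (X : ι → V × V)
    (P : WalkFamily G X) : Prop :=
  ∀ i j : ι, i ≠ j → ∀ e : Sym2 V, e ∈ (P i).edges → e ∉ (P j).edges

/-- A solution of the Edge-Disjoint Paths (EDP) instance `(G, X)`: a family of paths
connecting the terminal pairs that are pairwise edge-disjoint. -/
def IsEDPSolution {V : Type*} (G : SimpleGraph V) {ι : Type*} (X : ι → V × V)
    (P : WalkFamily G X) : Prop :=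
  (∀ i, (P i).IsPath) ∧ PairwiseEdgeDisjoint G X P

/-- `(G, X)` is a Yes-instance of EDP. -/
def EDPYes {V : Type*} (G : SimpleGraph V) {ι : Type*} (X : ι → V × V) : Prop :=
  ∃ P : WalkFamily G X, IsEDPSolution G X P

lemma exists_edge_of_start {V : Type*} {G : SimpleGraph V} {x y : V} (p : G.Walk x y)
    (h : x ≠ y) : ∃ v, v ≠ x ∧ s(x, v) ∈ p.edges := by
  cases p with
  | nil => exact absurd rfl h
  | cons h' q => exact ⟨_, h'.ne', by simp⟩

lemma exists_edge_of_endpoint {V : Type*} {G : SimpleGraph V} {x y u : V} (p : G.Walk x y)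
    (h : x ≠ y) (hu : x = u ∨ y = u) : ∃ v, v ≠ u ∧ s(u, v) ∈ p.edges := by
  rcases hu with rfl | rfl
  · exact exists_edge_of_start p h
  · obtain ⟨v, hv, hmem⟩ := exists_edge_of_start p.reverse h.symm
    exact ⟨v, hv, by simpa using hmem⟩

lemma endpoint_count_lt {V : Type*} [Fintype V] [DecidableEq V] (G : SimpleGraph V)
    {K : ℕ} (X : Fin K → V × V) (hX : ∀ i, (X i).1 ≠ (X i).2) (P : WalkFamily G X)
    (hdisj : PairwiseEdgeDisjoint G X P) (u : V) :
    (Finset.univ.filter (fun i : Fin K => (X i).1 = u ∨ (X i).2 = u)).card < Fintype.card V := by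
  have key : ∀ i : Fin K, ∃ v, ((X i).1 = u ∨ (X i).2 = u) →
      v ≠ u ∧ s(u, v) ∈ (P i).edges := by
    intro i
    by_cases h : (X i).1 = u ∨ (X i).2 = u
    · obtain ⟨v, hv⟩ := exists_edge_of_endpoint (P i) (hX i) h
      exact ⟨v, fun _ => hv⟩
    · exact ⟨u, fun h' => absurd h' h⟩
  choose f hf using key
  have hcard : (Finset.univ.filter (fun i : Fin K => (X i).1 = u ∨ (X i).2 = u)).card
      ≤ (Finset.univ.erase u).card := by
    apply Finset.card_le_card_of_injOn f
    · intro i hi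
      simp only [coe_filter, Set.mem_setOf_eq, mem_univ, true_and] at hi
      exact Finset.mem_erase.mpr ⟨(hf i hi).1, mem_univ _⟩
    · intro i hi j hj hij
      simp only [coe_filter, Set.mem_setOf_eq, mem_univ, true_and] at hi hj
      by_contra hne
      exact hdisj i j hne _ (hf i hi).2 (by rw [hij]; exact (hf j hj).2)
  have hpos : 0 < Fintype.card V := Fintype.card_pos_iff.mpr ⟨u⟩
  calc _ ≤ (Finset.univ.erase u).card := hcard
    _ = Fintype.card V - 1 := by rw [Finset.card_erase_of_mem (mem_univ u), Finset.card_univ]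
    _ < Fintype.card V := by omega

/-- On a complete graph `B` with distinguished distinct vertices `u, w`,
with `a, b, c` counting the occurrences of terminal pairs of the corresponding types, if
`n ≤ max (a+b) (a+c)`, then the instance is a No-instance of EDP. -/
theorem edp_clique_path_block_no {V : Type*} [Fintype V] [DecidableEq V]
    (B : SimpleGraph V) (hcomplete : ∀ x y : V, x ≠ y → B.Adj x y)
    (u w : V) (huw : u ≠ w)
    {K : ℕ} (X : Fin K → V × V) (hX : ∀ i, (X i).1 ≠ (X i).2)
    (a b c : ℕ)
    (ha : a = (Finset.univ.filter (fun i : Fin K => X i = (u, w) ∨ X i = (w, u))).card)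
    (hb : b = (Finset.univ.filter (fun i : Fin K =>
      ((X i).1 = u ∧ (X i).2 ≠ u ∧ (X i).2 ≠ w) ∨
      ((X i).2 = u ∧ (X i).1 ≠ u ∧ (X i).1 ≠ w))).card)
    (hc : c = (Finset.univ.filter (fun i : Fin K =>
      ((X i).1 = w ∧ (X i).2 ≠ u ∧ (X i).2 ≠ w) ∨
      ((X i).2 = w ∧ (X i).1 ≠ u ∧ (X i).1 ≠ w))).card)
    (hle : Fintype.card V ≤ max (a + b) (a + c)) :
    ¬ EDPYes B X := by
  rintro ⟨P, hpath, hdisj⟩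
  subst ha hb hc
  set A := Finset.univ.filter (fun i : Fin K => X i = (u, w) ∨ X i = (w, u)) with hA
  rcases le_max_iff.mp hle with h | h
  · have hlt := endpoint_count_lt B X hX P hdisj u
    set Bu := Finset.univ.filter (fun i : Fin K =>
      ((X i).1 = u ∧ (X i).2 ≠ u ∧ (X i).2 ≠ w) ∨
      ((X i).2 = u ∧ (X i).1 ≠ u ∧ (X i).1 ≠ w)) with hBu
    have hdis : Disjoint A Bu := by
      rw [Finset.disjoint_left]
      intro i hi hi'
      simp only [hA, hBu, mem_filter, mem_univ, true_and] at hi hi'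
      rcases hi with h1 | h1 <;> rcases hi' with h2 | h2 <;>
        simp [Prod.ext_iff] at h1 <;> obtain ⟨e1, e2⟩ := h1 <;> tauto
    have hsub : A ∪ Bu ⊆ Finset.univ.filter (fun i : Fin K => (X i).1 = u ∨ (X i).2 = u) := by
      intro i hi
      rcases Finset.mem_union.mp hi with hi | hi <;>
        simp only [hA, hBu, mem_filter, mem_univ, true_and, Prod.ext_iff] at hi ⊢ <;> tauto
    have := Finset.card_le_card hsub
    rw [Finset.card_union_of_disjoint hdis] at this
    omega
  · have hlt := endpoint_count_lt B X hX P hdisj w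
    set Cw := Finset.univ.filter (fun i : Fin K =>
      ((X i).1 = w ∧ (X i).2 ≠ u ∧ (X i).2 ≠ w) ∨
      ((X i).2 = w ∧ (X i).1 ≠ u ∧ (X i).1 ≠ w)) with hCw
    have hdis : Disjoint A Cw := by
      rw [Finset.disjoint_left]
      intro i hi hi'
      simp only [hA, hCw, mem_filter, mem_univ, true_and] at hi hi'
      rcases hi with h1 | h1 <;> rcases hi' with h2 | h2 <;>
        simp [Prod.ext_iff] at h1 <;> obtain ⟨e1, e2⟩ := h1 <;> tauto
    have hsub : A ∪ Cw ⊆ Finset.univ.filter (fun i : Fin K => (X i).1 = w ∨ (X i).2 = w) := by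
      intro i hi
      rcases Finset.mem_union.mp hi with hi | hi <;>
        simp only [hA, hCw, mem_filter, mem_univ, true_and, Prod.ext_iff] at hi ⊢ <;> tauto
    have := Finset.card_le_card hsub
    rw [Finset.card_union_of_disjoint hdis] at this
    omega
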